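/- Normality of truncated dilated simplices: for integers 0 < m < n, the polytope P = nP₁ ∩ {z ≤ m} = Conv{(0,0,0),(n,0,0),(0,n,0),(0,0,m),(n−m,0,m),(0,n−m,m)} ⊂ ℝ³ is a normal lattice polytope. -/

import Mathlib

open scoped Pointwise

def IsLatticePt {d : ℕ} (x : Fin d → ℝ) : Prop := ∀ i, ∃ z : ℤ, x i = (z : ℝ)

def IsLatticePolytope {d : ℕ} (P : Set (Fin d → ℝ)) : Prop :=
  ∃ V : Finset (Fin d → ℝ), V.Nonempty ∧ (∀ v ∈ V, IsLatticePt v) ∧ P = convexHull ℝ ↑V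

def IsNormalPolytope {d : ℕ} (P : Set (Fin d → ℝ)) : Prop :=
  ∀ n : ℕ, 1 ≤ n → ∀ x ∈ (n : ℝ) • P, IsLatticePt x →
    ∃ f : Fin n → (Fin d → ℝ), (∀ i, f i ∈ P ∧ IsLatticePt (f i)) ∧ x = ∑ i, f i

def P1 : Set (Fin 3 → ℝ) := convexHull ℝ {![0,0,0], ![1,0,0], ![0,1,0], ![0,0,1]}

def dot2 (x y : Fin 2 → ℝ) : ℝ := ∑ i, x i * y i

def normalCone (P : Set (Fin 2 → ℝ)) (u : Fin 2 → ℝ) : Set (Fin 2 → ℝ) :=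
  {y | ∀ x ∈ P, dot2 x y ≤ dot2 u y}

/-- The normal fan of `A` refines the normal fan of `B`: every normal cone of `A`
is contained in some normal cone of `B`. -/
def FanRefines (A B : Set (Fin 2 → ℝ)) : Prop :=
  ∀ u ∈ A, ∃ v ∈ B, normalCone A u ⊆ normalCone B v

/-- At every vertex the primitive edge directions form a ℤ-basis of ℤ². -/
def IsSmoothPolygon (F : Set (Fin 2 → ℝ)) : Prop :=
  ∀ u ∈ Set.extremePoints ℝ F, ∃ m₁ m₂ : Fin 2 → ℤ,
    (m₁ 0 * m₂ 1 - m₁ 1 * m₂ 0 = 1 ∨ m₁ 0 * m₂ 1 - m₁ 1 * m₂ 0 = -1) ∧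
    {y : Fin 2 → ℝ | ∃ t : ℝ, ∃ x ∈ F, 0 ≤ t ∧ y = t • (x - u)} =
      {y : Fin 2 → ℝ | ∃ a b : ℝ, 0 ≤ a ∧ 0 ≤ b ∧
        y = a • (fun i => (m₁ i : ℝ)) + b • (fun i => (m₂ i : ℝ))}

def emb (v : Fin 2 → ℝ) (t : ℝ) : Fin 3 → ℝ := ![v 0, v 1, t]

def cayley (F G : Set (Fin 2 → ℝ)) : Set (Fin 3 → ℝ) :=
  convexHull ℝ ((fun v => emb v 0) '' F ∪ (fun v => emb v 1) '' G)


def Sdesc (m n : ℝ) : Set (Fin 3 → ℝ) :=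
  {p | 0 ≤ p 0 ∧ 0 ≤ p 1 ∧ 0 ≤ p 2 ∧ p 2 ≤ m ∧ p 0 + p 1 + p 2 ≤ n}

lemma convex_Sdesc (m n : ℝ) : Convex ℝ (Sdesc m n) := by
  intro p hp q hq a b ha hb hab
  obtain ⟨hp0, hp1, hp2, hp3, hp4⟩ := hp
  obtain ⟨hq0, hq1, hq2, hq3, hq4⟩ := hq
  refine ⟨?_, ?_, ?_, ?_, ?_⟩ <;>
    simp only [Pi.add_apply, Pi.smul_apply, smul_eq_mul] <;> nlinarith

lemma conv_sub_S (m n : ℝ) (hm : 0 ≤ m) (hmn : m ≤ n) :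
    convexHull ℝ ({![0,0,0], ![n,0,0], ![0,n,0], ![0,0,m], ![n-m,0,m], ![0,n-m,m]} :
      Set (Fin 3 → ℝ)) ⊆ Sdesc m n := by
  apply convexHull_min _ (convex_Sdesc m n)
  intro v hv
  simp only [Set.mem_insert_iff, Set.mem_singleton_iff] at hv
  rcases hv with rfl | rfl | rfl | rfl | rfl | rfl <;>
    refine ⟨?_, ?_, ?_, ?_, ?_⟩ <;> simp <;> linarith


lemma S_sub_conv (m n : ℝ) (hm : 0 < m) (hmn : m < n) :
    Sdesc m n ⊆ convexHull ℝ ({![0,0,0], ![n,0,0], ![0,n,0], ![0,0,m], ![n-m,0,m], ![0,n-m,m]} :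
      Set (Fin 3 → ℝ)) := by
  intro p hp
  obtain ⟨h0, h1, h2, h3, h4⟩ := hp
  have hr : (0:ℝ) < n - p 2 := by linarith
  set V : Set (Fin 3 → ℝ) := {![0,0,0], ![n,0,0], ![0,n,0], ![0,0,m], ![n-m,0,m], ![0,n-m,m]} with hV
  set v : Fin 6 → (Fin 3 → ℝ) :=
    ![![0,0,0], ![n,0,0], ![0,n,0], ![0,0,m], ![n-m,0,m], ![0,n-m,m]] with hv
  set w : Fin 6 → ℝ :=
    ![(1 - p 2/m)*(1-(p 0+p 1)/(n-p 2)), (1 - p 2/m)*(p 0/(n-p 2)), (1 - p 2/m)*(p 1/(n-p 2)),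
      (p 2/m)*(1-(p 0+p 1)/(n-p 2)), (p 2/m)*(p 0/(n-p 2)), (p 2/m)*(p 1/(n-p 2))] with hw
  have A : (0:ℝ) ≤ 1 - p 2/m := by
    rw [sub_nonneg]; exact div_le_one_of_le₀ h3 hm.le
  have B : (0:ℝ) ≤ 1 - (p 0 + p 1)/(n - p 2) := by
    rw [sub_nonneg, div_le_one hr]; linarith
  have C : (0:ℝ) ≤ p 2/m := by positivity
  have D : (0:ℝ) ≤ p 0/(n - p 2) := by positivity
  have E : (0:ℝ) ≤ p 1/(n - p 2) := by positivity
  have hwpos : ∀ i, 0 ≤ w i := by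
    intro i
    fin_cases i <;>
      simp only [hw, Matrix.cons_val_zero, Matrix.cons_val_one, Matrix.head_cons,
        Matrix.cons_val_succ] <;>
      exact mul_nonneg (by assumption) (by assumption)
  have hw1 : ∑ i, w i = 1 := by
    simp only [hw, Fin.sum_univ_succ, Matrix.cons_val_zero, Matrix.cons_val_succ,
      Finset.univ_unique, Finset.sum_singleton, Fin.default_eq_zero, Finset.sum_const,
      Finset.card_singleton, one_smul, Fin.sum_univ_zero, add_zero]
    field_simp
    ring
  have hvmem : ∀ i, v i ∈ convexHull ℝ V := by
    intro i
    apply subset_convexHull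
    fin_cases i
    · exact Or.inl rfl
    · exact Or.inr (Or.inl rfl)
    · exact Or.inr (Or.inr (Or.inl rfl))
    · exact Or.inr (Or.inr (Or.inr (Or.inl rfl)))
    · exact Or.inr (Or.inr (Or.inr (Or.inr (Or.inl rfl))))
    · exact Or.inr (Or.inr (Or.inr (Or.inr (Or.inr rfl))))
  have e : ∀ j : Fin 3, p j = (∑ i, w i • v i) j := by
    have key : ∀ j : Fin 3, (∑ i, w i • v i) j = ∑ i, w i * v i j := by
      intro j; rw [Finset.sum_apply]; simp [Pi.smul_apply]
    have e0 : p 0 = (∑ i, w i • v i) 0 := by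
      rw [key]
      simp only [hw, hv, Fin.sum_univ_succ, Fin.sum_univ_zero, Matrix.cons_val_zero,
        Matrix.cons_val_one, Matrix.head_cons, Matrix.cons_val_succ, add_zero]
      field_simp; ring
    have e1 : p 1 = (∑ i, w i • v i) 1 := by
      rw [key]
      simp only [hw, hv, Fin.sum_univ_succ, Fin.sum_univ_zero, Matrix.cons_val_zero,
        Matrix.cons_val_one, Matrix.head_cons, Matrix.cons_val_succ, add_zero]
      field_simp; ring
    have e2 : p 2 = (∑ i, w i • v i) 2 := by
      rw [key]
      simp only [hw, hv, Fin.sum_univ_succ, Fin.sum_univ_zero, Matrix.cons_val_zero,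
        Matrix.cons_val_one, Matrix.head_cons, Matrix.cons_val_succ, add_zero,
        Matrix.cons_val_two, Matrix.tail_cons]
      field_simp; ring
    intro j
    fin_cases j
    · exact e0
    · exact e1
    · exact e2
  have hpeq : p = ∑ i, w i • v i := funext e
  rw [hpeq]
  exact (convex_convexHull ℝ V).sum_mem (fun i _ => hwpos i) hw1 (fun i _ => hvmem i)

lemma arith_step (m n M N a b c : ℤ) (hm : 0 < m) (hmn : m ≤ n) (hM : 0 ≤ M) (hMN : M ≤ N)
    (ha : 0 ≤ a) (hb : 0 ≤ b) (hc : 0 ≤ c) (hcm : c ≤ M + m) (habc : a + b + c ≤ N + n) :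
    ∃ p0 p1 p2 : ℤ, 0 ≤ p0 ∧ 0 ≤ p1 ∧ 0 ≤ p2 ∧ p2 ≤ m ∧ p0 + p1 + p2 ≤ n ∧
      p0 ≤ a ∧ p1 ≤ b ∧ p2 ≤ c ∧ c - p2 ≤ M ∧ (a - p0) + (b - p1) + (c - p2) ≤ N := by
  refine ⟨min a (min (a+b) (n - min c m)),
    min (a+b) (n - min c m) - min a (min (a+b) (n - min c m)), min c m, ?_⟩
  omega

lemma decomp (m n : ℤ) (hm : 0 < m) (hmn : m ≤ n) :
    ∀ k : ℕ, ∀ a b c : ℤ, 0 ≤ a → 0 ≤ b → 0 ≤ c → c ≤ k * m → a + b + c ≤ k * n →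
    ∃ f : Fin k → ℤ × ℤ × ℤ,
      (∀ i, 0 ≤ (f i).1 ∧ 0 ≤ (f i).2.1 ∧ 0 ≤ (f i).2.2 ∧ (f i).2.2 ≤ m ∧
        (f i).1 + (f i).2.1 + (f i).2.2 ≤ n) ∧
      ∑ i, (f i).1 = a ∧ ∑ i, (f i).2.1 = b ∧ ∑ i, (f i).2.2 = c := by
  intro k
  induction k with
  | zero =>
    intro a b c ha hb hc hcm habc
    simp only [Nat.cast_zero, zero_mul] at hcm habc
    refine ⟨fun _ => (0,0,0), fun i => i.elim0, ?_, ?_, ?_⟩ <;> simp <;> omega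
  | succ k ih =>
    intro a b c ha hb hc hcm habc
    have hM : (0:ℤ) ≤ (k:ℤ) * m := mul_nonneg (by positivity) hm.le
    have hMN : (k:ℤ) * m ≤ (k:ℤ) * n := mul_le_mul_of_nonneg_left hmn (by positivity)
    have hcm' : c ≤ (k:ℤ) * m + m := by push_cast at hcm; linarith
    have habc' : a + b + c ≤ (k:ℤ) * n + n := by push_cast at habc; linarith
    obtain ⟨p0, p1, p2, h1, h2, h3, h4, h5, h6, h7, h8, h9, h10⟩ :=
      arith_step m n ((k:ℤ)*m) ((k:ℤ)*n) a b c hm hmn hM hMN ha hb hc hcm' habc'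
    obtain ⟨f, hf, hfa, hfb, hfc⟩ := ih (a - p0) (b - p1) (c - p2)
      (by omega) (by omega) (by omega) h9 h10
    refine ⟨Fin.cons (p0, p1, p2) f, ?_, ?_, ?_, ?_⟩
    · intro i
      refine Fin.cases ?_ ?_ i
      · exact ⟨h1, h2, h3, h4, h5⟩
      · intro j; exact hf j
    · simp only [Fin.sum_univ_succ, Fin.cons_zero, Fin.cons_succ]; omega
    · simp only [Fin.sum_univ_succ, Fin.cons_zero, Fin.cons_succ]; omega
    · simp only [Fin.sum_univ_succ, Fin.cons_zero, Fin.cons_succ]; omega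

/-- Truncated dilated simplices are normal. -/
theorem stmt7 (m n : ℕ) (hm : 0 < m) (hmn : m < n) :
    IsNormalPolytope (convexHull ℝ
      {![0,0,0], ![(n:ℝ),0,0], ![0,(n:ℝ),0], ![0,0,(m:ℝ)],
       ![(n:ℝ)-(m:ℝ),0,(m:ℝ)], ![0,(n:ℝ)-(m:ℝ),(m:ℝ)]} : Set (Fin 3 → ℝ)) := by
  have hm' : (0:ℝ) < m := by exact_mod_cast hm
  have hmn' : (m:ℝ) < n := by exact_mod_cast hmn
  intro k hk x hx hlat
  obtain ⟨y, hy, rfl⟩ := hx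
  have hyS : y ∈ Sdesc (m:ℝ) (n:ℝ) := conv_sub_S _ _ hm'.le hmn'.le hy
  obtain ⟨s0, s1, s2, s3, s4⟩ := hyS
  obtain ⟨a, ha⟩ := hlat 0
  obtain ⟨b, hb⟩ := hlat 1
  obtain ⟨c, hc⟩ := hlat 2
  have ha' : (a:ℝ) = k * y 0 := by rw [← ha]; simp
  have hb' : (b:ℝ) = k * y 1 := by rw [← hb]; simp
  have hc' : (c:ℝ) = k * y 2 := by rw [← hc]; simp
  have hk0 : (0:ℝ) ≤ (k:ℝ) := Nat.cast_nonneg k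
  have hA : (0:ℤ) ≤ a := by
    have : (0:ℝ) ≤ (a:ℝ) := by rw [ha']; exact mul_nonneg hk0 s0
    exact_mod_cast this
  have hB : (0:ℤ) ≤ b := by
    have : (0:ℝ) ≤ (b:ℝ) := by rw [hb']; exact mul_nonneg hk0 s1
    exact_mod_cast this
  have hC : (0:ℤ) ≤ c := by
    have : (0:ℝ) ≤ (c:ℝ) := by rw [hc']; exact mul_nonneg hk0 s2
    exact_mod_cast this
  have hCm : c ≤ (k:ℤ) * m := by
    have : (c:ℝ) ≤ (k:ℝ) * m := by rw [hc']; exact mul_le_mul_of_nonneg_left s3 hk0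
    exact_mod_cast this
  have hS : a + b + c ≤ (k:ℤ) * n := by
    have h1 : (a:ℝ) + b + c = (k:ℝ) * (y 0 + y 1 + y 2) := by rw [ha', hb', hc']; ring
    have : ((a:ℝ) + b + c) ≤ (k:ℝ) * n := by
      rw [h1]; exact mul_le_mul_of_nonneg_left s4 hk0
    exact_mod_cast this
  obtain ⟨f, hf, hfa, hfb, hfc⟩ := decomp (m:ℤ) (n:ℤ)
    (by exact_mod_cast hm) (by exact_mod_cast hmn.le) k a b c hA hB hC hCm hS
  have e0 : ((k:ℝ) • y) 0 = ∑ i, ((f i).1 : ℝ) := by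
    have h : ((k:ℝ) • y) 0 = (a:ℝ) := ha
    rw [h]; exact_mod_cast hfa.symm
  have e1 : ((k:ℝ) • y) 1 = ∑ i, ((f i).2.1 : ℝ) := by
    have h : ((k:ℝ) • y) 1 = (b:ℝ) := hb
    rw [h]; exact_mod_cast hfb.symm
  have e2 : ((k:ℝ) • y) 2 = ∑ i, ((f i).2.2 : ℝ) := by
    have h : ((k:ℝ) • y) 2 = (c:ℝ) := hc
    rw [h]; exact_mod_cast hfc.symm
  refine ⟨fun i => ![((f i).1 : ℝ), ((f i).2.1 : ℝ), ((f i).2.2 : ℝ)], fun i => ⟨?_, ?_⟩, ?_⟩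
  · apply S_sub_conv (m:ℝ) (n:ℝ) hm' hmn'
    obtain ⟨q1, q2, q3, q4, q5⟩ := hf i
    beta_reduce
    have c0 : (![((f i).1:ℝ), ((f i).2.1:ℝ), ((f i).2.2:ℝ)] : Fin 3 → ℝ) 0 = ((f i).1:ℝ) := rfl
    have c1 : (![((f i).1:ℝ), ((f i).2.1:ℝ), ((f i).2.2:ℝ)] : Fin 3 → ℝ) 1 = ((f i).2.1:ℝ) := rfl
    have c2 : (![((f i).1:ℝ), ((f i).2.1:ℝ), ((f i).2.2:ℝ)] : Fin 3 → ℝ) 2 = ((f i).2.2:ℝ) := rfl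
    refine ⟨?_, ?_, ?_, ?_, ?_⟩
    · rw [c0]; exact_mod_cast q1
    · rw [c1]; exact_mod_cast q2
    · rw [c2]; exact_mod_cast q3
    · rw [c2]; exact_mod_cast q4
    · rw [c0, c1, c2]; exact_mod_cast q5
  · intro j
    fin_cases j
    · exact ⟨(f i).1, rfl⟩
    · exact ⟨(f i).2.1, rfl⟩
    · exact ⟨(f i).2.2, rfl⟩
  · funext j
    fin_cases j
    · rw [Finset.sum_apply]; exact e0
    · rw [Finset.sum_apply]; exact e1
    · rw [Finset.sum_apply]; exact e2
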